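/- The class R̃⁰_α(ℋ₀,ℋ₁) is nonempty (i.e., there exist auxiliary spaces and holomorphic pairs forming a collection in R̃⁰_α(ℋ₀,ℋ₁)) if and only if dim ℋ₀ = dim ℋ₁. In particular, if dim ℋ₀ < ∞, then R̃⁰_α(ℋ₀,ℋ₁) is nonempty if and only if ℋ₀ = ℋ₁. -/

import Mathlib

/- Statement 2: Proposition 2.2(3) — R̃⁰_α(ℋ₀,ℋ₁) is nonempty iff dim ℋ₀ = dim ℋ₁.
   (−τ₊(λ̄))×_α = −τ₋(λ) and the image formula for τ₋(λ) (λ ∈ ℂ₋), and symmetrically on ℂ₊. -/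

noncomputable section
open Complex ContinuousLinearMap
open scoped InnerProductSpace

/-- The open upper half plane. -/
def UHP : Set ℂ := {z | 0 < z.im}

/-- The open lower half plane. -/
def LHP : Set ℂ := {z | z.im < 0}

/-- The "imaginary part" (T − T*)/(2i) of a bounded operator. -/
def ImOp {K : Type*} [NormedAddCommGroup K] [InnerProductSpace ℂ K] [CompleteSpace K]
    (T : K →L[ℂ] K) : K →L[ℂ] K := (2 * Complex.I)⁻¹ • (T - adjoint T)

/-- The orthogonal projection of `H0` onto `ℋ₂ = ℋ₀ ⊖ ℋ₁`, as an operator on `H0`. -/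
def P2full {H0 : Type*} [NormedAddCommGroup H0] [InnerProductSpace ℂ H0] [CompleteSpace H0]
    (H1 : Submodule ℂ H0) (hH1 : CompleteSpace ↥H1) : H0 →L[ℂ] H0 :=
  letI := hH1
  ContinuousLinearMap.id ℂ H0 - H1.subtypeL.comp (Submodule.orthogonalProjectionOnto H1)

/-- The class `R̃_α(ℋ₀,ℋ₁)` of collections `τ = {τ₊,τ₋}` of holomorphic operator pairs
`(C₀(λ),C₁(λ))` (on `ℂ₊`) and `(D₀(λ),D₁(λ))` (on `ℂ₋`); Definition 2.1 of the paper,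
with the blocks `C₀₁ = C₀∘ι₁`, `C₀₂ = C₀∘ι₂` expressed through `C₀₁* = P₁∘C₀*` and
`C₀₂C₀₂* = C₀P₂C₀*`. -/
def IsRPairClass {H0 Kp Km : Type*}
    [NormedAddCommGroup H0] [InnerProductSpace ℂ H0] [CompleteSpace H0]
    [NormedAddCommGroup Kp] [InnerProductSpace ℂ Kp] [CompleteSpace Kp]
    [NormedAddCommGroup Km] [InnerProductSpace ℂ Km] [CompleteSpace Km]
    (H1 : Submodule ℂ H0) (hH1 : CompleteSpace ↥H1) (α : ℝ)
    (C0 : ℂ → H0 →L[ℂ] Kp) (C1 : ℂ → ↥H1 →L[ℂ] Kp)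
    (D0 : ℂ → H0 →L[ℂ] Km) (D1 : ℂ → ↥H1 →L[ℂ] Km) : Prop :=
  letI := hH1
  (α = 1 ∨ α = -1) ∧
  DifferentiableOn ℂ C0 UHP ∧ DifferentiableOn ℂ C1 UHP ∧
  DifferentiableOn ℂ D0 LHP ∧ DifferentiableOn ℂ D1 LHP ∧
  -- (i)  2 Im (C₁(λ)C₀₁*(λ)) + α C₀₂(λ)C₀₂*(λ) ≥ 0  on ℂ₊
  (∀ z ∈ UHP,
    ((2 : ℂ) • ImOp ((C1 z).comp ((Submodule.orthogonalProjectionOnto H1).comp (adjoint (C0 z))))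
      + (α : ℂ) • ((C0 z).comp ((P2full H1 hH1).comp (adjoint (C0 z))))).IsPositive) ∧
  -- (ii)  2 Im (D₁(λ)D₀₁*(λ)) + α D₀₂(λ)D₀₂*(λ) ≤ 0  on ℂ₋
  (∀ z ∈ LHP,
    (-((2 : ℂ) • ImOp ((D1 z).comp ((Submodule.orthogonalProjectionOnto H1).comp (adjoint (D0 z))))
      + (α : ℂ) • ((D0 z).comp ((P2full H1 hH1).comp (adjoint (D0 z)))))).IsPositive) ∧
  -- (iii)  C₁(λ)D₀₁*(λ̄) − C₀₁(λ)D₁*(λ̄) + iα C₀₂(λ)D₀₂*(λ̄) = 0  on ℂ₊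
  (∀ z ∈ UHP,
    (C1 z).comp ((Submodule.orthogonalProjectionOnto H1).comp (adjoint (D0 ((starRingEnd ℂ) z))))
      - ((C0 z).comp H1.subtypeL).comp (adjoint (D1 ((starRingEnd ℂ) z)))
      + (Complex.I * (α : ℂ)) •
          ((C0 z).comp ((P2full H1 hH1).comp (adjoint (D0 ((starRingEnd ℂ) z))))) = 0) ∧
  -- (iv) invertibility conditions
  (α = 1 →
    (∀ z ∈ UHP, ∃ e : H0 ≃L[ℂ] Kp,
        (e : H0 →L[ℂ] Kp) = C0 z - Complex.I • (C1 z).comp (Submodule.orthogonalProjectionOnto H1)) ∧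
    (∀ z ∈ LHP, ∃ e : ↥H1 ≃L[ℂ] Km,
        (e : ↥H1 →L[ℂ] Km) = (D0 z).comp H1.subtypeL + Complex.I • D1 z)) ∧
  (α = -1 →
    (∀ z ∈ UHP, ∃ e : ↥H1 ≃L[ℂ] Kp,
        (e : ↥H1 →L[ℂ] Kp) = (C0 z).comp H1.subtypeL - Complex.I • C1 z) ∧
    (∀ z ∈ LHP, ∃ e : H0 ≃L[ℂ] Km,
        (e : H0 →L[ℂ] Km) = D0 z + Complex.I • (D1 z).comp (Submodule.orthogonalProjectionOnto H1)))

/-- The linear relation `{(h₀,h₁) ∈ ℋ₀ ⊕ ℋ₁ : C₀ h₀ + C₁ h₁ = 0}` of an operator pair. -/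
def relPair {H0 K : Type*}
    [NormedAddCommGroup H0] [InnerProductSpace ℂ H0]
    [NormedAddCommGroup K] [InnerProductSpace ℂ K]
    (H1 : Submodule ℂ H0) (C0 : H0 →L[ℂ] K) (C1 : ↥H1 →L[ℂ] K) : Set (H0 × ↥H1) :=
  {p | C0 p.1 + C1 p.2 = 0}

/-- `−θ = {(h₀, −h₁) : (h₀,h₁) ∈ θ}`. -/
def negRel {H0 : Type*} [NormedAddCommGroup H0] [InnerProductSpace ℂ H0]
    (H1 : Submodule ℂ H0) (S : Set (H0 × ↥H1)) : Set (H0 × ↥H1) :=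
  {p | (p.1, -p.2) ∈ S}

/-- The `(×,α)`-adjoint relation `θ×_α`. -/
def crossRel {H0 : Type*} [NormedAddCommGroup H0] [InnerProductSpace ℂ H0] [CompleteSpace H0]
    (H1 : Submodule ℂ H0) (hH1 : CompleteSpace ↥H1) (α : ℝ)
    (S : Set (H0 × ↥H1)) : Set (H0 × ↥H1) :=
  {k | ∀ p ∈ S,
    ⟪((k.2 : ↥H1) : H0), p.1⟫_ℂ - ⟪k.1, ((p.2 : ↥H1) : H0)⟫_ℂ
      + Complex.I * (α : ℂ) * ⟪P2full H1 hH1 k.1, P2full H1 hH1 p.1⟫_ℂ = 0}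


/-- A bundled complex Hilbert space. -/
structure HilbertC : Type (u + 1) where
  carrier : Type u
  [nacg : NormedAddCommGroup carrier]
  [ips : InnerProductSpace ℂ carrier]
  [cs : CompleteSpace carrier]

attribute [instance] HilbertC.nacg HilbertC.ips HilbertC.cs

/-- The subclass `R̃⁰_α(ℋ₀,ℋ₁)`: equality holds in condition (i) and, in addition,
`C₀₁(λ)+iC₁(λ)` (for `α = +1`), resp. `C₀(λ)+iC₁(λ)P₁` (for `α = −1`), is boundedly
invertible. -/
def IsRZeroPair {H0 Kp Km : Type*}
    [NormedAddCommGroup H0] [InnerProductSpace ℂ H0] [CompleteSpace H0]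
    [NormedAddCommGroup Kp] [InnerProductSpace ℂ Kp] [CompleteSpace Kp]
    [NormedAddCommGroup Km] [InnerProductSpace ℂ Km] [CompleteSpace Km]
    (H1 : Submodule ℂ H0) (hH1 : CompleteSpace ↥H1) (α : ℝ)
    (C0 : ℂ → H0 →L[ℂ] Kp) (C1 : ℂ → ↥H1 →L[ℂ] Kp)
    (D0 : ℂ → H0 →L[ℂ] Km) (D1 : ℂ → ↥H1 →L[ℂ] Km) : Prop :=
  letI := hH1
  IsRPairClass H1 hH1 α C0 C1 D0 D1 ∧
  (∀ z ∈ UHP,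
    (2 : ℂ) • ImOp ((C1 z).comp ((Submodule.orthogonalProjectionOnto H1).comp (adjoint (C0 z))))
      + (α : ℂ) • ((C0 z).comp ((P2full H1 hH1).comp (adjoint (C0 z)))) = 0) ∧
  (α = 1 → ∀ z ∈ UHP, ∃ e : ↥H1 ≃L[ℂ] Kp,
      (e : ↥H1 →L[ℂ] Kp) = (C0 z).comp H1.subtypeL + Complex.I • C1 z) ∧
  (α = -1 → ∀ z ∈ UHP, ∃ e : H0 ≃L[ℂ] Kp,
      (e : H0 →L[ℂ] Kp) = C0 z + Complex.I • (C1 z).comp (Submodule.orthogonalProjectionOnto H1))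

universe u

section AuxNS
set_option linter.unusedSectionVars false
set_option synthInstance.maxHeartbeats 1000000
set_option maxHeartbeats 1600000


variable {H0 : Type*} [NormedAddCommGroup H0] [InnerProductSpace ℂ H0] [CompleteSpace H0]
  {K : Type*} [NormedAddCommGroup K] [InnerProductSpace ℂ K] [CompleteSpace K]

/-- `q = I - ι∘p`, the projection onto `H1ᗮ` as an endomorphism of `H0`. -/
def qOp (H1 : Submodule ℂ H0) [CompleteSpace H1] : H0 →L[ℂ] H0 :=
  ContinuousLinearMap.id ℂ H0 - H1.subtypeL.comp (Submodule.orthogonalProjectionOnto H1)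

variable (H1 : Submodule ℂ H0) [hH1 : CompleteSpace H1]

lemma adjoint_smulC (c : ℂ) (A : H0 →L[ℂ] K) :
    adjoint (c • A) = (starRingEnd ℂ c) • adjoint A := by
  rw [eq_comm, eq_adjoint_iff]
  intro x y
  simp [inner_smul_left, inner_smul_right, adjoint_inner_left]

lemma hpi : (Submodule.orthogonalProjectionOnto H1).comp H1.subtypeL = ContinuousLinearMap.id ℂ H1 := by
  ext x; simp

lemma hpi' (f : K →L[ℂ] H1) : (Submodule.orthogonalProjectionOnto H1).comp (H1.subtypeL.comp f) = f := by
  rw [← ContinuousLinearMap.comp_assoc, hpi, ContinuousLinearMap.id_comp]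

lemma hqi : (qOp H1).comp H1.subtypeL = 0 := by
  rw [qOp, ContinuousLinearMap.sub_comp, ContinuousLinearMap.id_comp,
    ContinuousLinearMap.comp_assoc, hpi, ContinuousLinearMap.comp_id, sub_self]

lemma hqi' (f : K →L[ℂ] H1) : (qOp H1).comp (H1.subtypeL.comp f) = 0 := by
  rw [← ContinuousLinearMap.comp_assoc, hqi, ContinuousLinearMap.zero_comp]

lemma hpq : (Submodule.orthogonalProjectionOnto H1 : H0 →L[ℂ] H1).comp (qOp H1) = 0 := by
  rw [qOp, ContinuousLinearMap.comp_sub, ContinuousLinearMap.comp_id,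
    ← ContinuousLinearMap.comp_assoc, hpi, ContinuousLinearMap.id_comp, sub_self]

lemma hpq' (f : K →L[ℂ] H0) :
    (Submodule.orthogonalProjectionOnto H1 : H0 →L[ℂ] H1).comp ((qOp H1).comp f) = 0 := by
  rw [← ContinuousLinearMap.comp_assoc, hpq, ContinuousLinearMap.zero_comp]

lemma hip' (f : K →L[ℂ] H0) :
    H1.subtypeL.comp ((Submodule.orthogonalProjectionOnto H1 : H0 →L[ℂ] H1).comp f) = f - (qOp H1).comp f := by
  rw [qOp, ContinuousLinearMap.sub_comp, ContinuousLinearMap.id_comp,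
    ContinuousLinearMap.comp_assoc]
  abel

lemma hqq : (qOp H1).comp (qOp H1) = qOp H1 := by
  nth_rewrite 2 [qOp]
  rw [ContinuousLinearMap.comp_sub, ContinuousLinearMap.comp_id, hqi']
  simp

lemma hqq' (f : K →L[ℂ] H0) : (qOp H1).comp ((qOp H1).comp f) = (qOp H1).comp f := by
  rw [← ContinuousLinearMap.comp_assoc, hqq]

lemma hadj_q : adjoint (qOp H1) = qOp H1 := by
  rw [qOp, map_sub, adjoint_id, adjoint_comp, Submodule.adjoint_subtypeL,
    Submodule.adjoint_orthogonalProjection]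

set_option linter.unusedSectionVars false

lemma hMadj (a : H0 →L[ℂ] K) (b : H1 →L[ℂ] K) :
    adjoint (a - Complex.I • (b.comp (Submodule.orthogonalProjectionOnto H1)))
      = adjoint a + Complex.I • (H1.subtypeL.comp (adjoint b)) := by
  rw [map_sub, adjoint_smulC, adjoint_comp, Submodule.adjoint_orthogonalProjection,
    Complex.conj_I, neg_smul, sub_neg_eq_add]

lemma hNadj (a : H0 →L[ℂ] K) (b : H1 →L[ℂ] K) :
    adjoint (a.comp H1.subtypeL + Complex.I • b)
      = (Submodule.orthogonalProjectionOnto H1).comp (adjoint a) - Complex.I • adjoint b := by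
  rw [map_add, adjoint_comp, Submodule.adjoint_subtypeL, adjoint_smulC,
    Complex.conj_I, neg_smul, ← sub_eq_add_neg]

lemma hTadj (a : H0 →L[ℂ] K) (b : H1 →L[ℂ] K) :
    adjoint (b.comp ((Submodule.orthogonalProjectionOnto H1).comp (adjoint a)))
      = (a.comp H1.subtypeL).comp (adjoint b) := by
  rw [adjoint_comp, adjoint_comp, adjoint_adjoint, Submodule.adjoint_orthogonalProjection,
    ContinuousLinearMap.comp_assoc]

lemma hMain (a : H0 →L[ℂ] K) (b : H1 →L[ℂ] K)
    (hK : b.comp ((Submodule.orthogonalProjectionOnto H1).comp (adjoint a))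
        - (a.comp H1.subtypeL).comp (adjoint b)
        + Complex.I • (a.comp ((qOp H1).comp (adjoint a))) = 0) :
    (a - Complex.I • (b.comp (Submodule.orthogonalProjectionOnto H1))).comp
      ((ContinuousLinearMap.id ℂ H0 + qOp H1).comp
        (adjoint (a - Complex.I • (b.comp (Submodule.orthogonalProjectionOnto H1)))))
    = (a.comp H1.subtypeL + Complex.I • b).comp
        (adjoint (a.comp H1.subtypeL + Complex.I • b)) := by
  have hK2 : a.comp ((qOp H1).comp (adjoint a))
      = Complex.I • (b.comp ((Submodule.orthogonalProjectionOnto H1).comp (adjoint a)))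
        - Complex.I • (a.comp (H1.subtypeL.comp (adjoint b))) := by
    have h3 := congrArg (fun X => (-Complex.I) • X) hK
    simp only [smul_add, smul_sub, smul_smul, smul_zero, neg_mul, Complex.I_mul_I, neg_neg,
      one_smul, ContinuousLinearMap.comp_assoc] at h3
    linear_combination (norm := module) h3
  rw [hMadj, hNadj]
  simp only [ContinuousLinearMap.comp_add, ContinuousLinearMap.add_comp,
    ContinuousLinearMap.comp_sub, ContinuousLinearMap.sub_comp,
    ContinuousLinearMap.comp_smul, ContinuousLinearMap.smul_comp,
    ContinuousLinearMap.comp_assoc, ContinuousLinearMap.comp_id, ContinuousLinearMap.id_comp,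
    hpi', hqi', hpq', hqq', hip',
    ContinuousLinearMap.comp_zero, ContinuousLinearMap.zero_comp, smul_zero,
    add_zero, zero_add, smul_smul, Complex.I_mul_I, neg_smul, one_smul, neg_neg]
  rw [hK2]
  module

/-- The adjoint of a continuous linear equivalence between Hilbert spaces,
as a continuous linear equivalence. -/
def adjCLE (e : H0 ≃L[ℂ] K) : K ≃L[ℂ] H0 :=
  ContinuousLinearEquiv.equivOfInverse (adjoint (e : H0 →L[ℂ] K))
    (adjoint (e.symm : K →L[ℂ] H0))
    (fun x => by
      have h : (adjoint (e.symm : K →L[ℂ] H0)).comp (adjoint (e : H0 →L[ℂ] K))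
          = ContinuousLinearMap.id ℂ K := by
        rw [← adjoint_comp, ← adjoint_id (𝕜 := ℂ) (E := K)]
        congr 1
        ext v; simp
      have := ContinuousLinearMap.ext_iff.mp h x
      simpa using this)
    (fun x => by
      have h : (adjoint (e : H0 →L[ℂ] K)).comp (adjoint (e.symm : K →L[ℂ] H0))
          = ContinuousLinearMap.id ℂ H0 := by
        rw [← adjoint_comp, ← adjoint_id (𝕜 := ℂ) (E := H0)]
        congr 1
        ext v; simp
      have := ContinuousLinearMap.ext_iff.mp h x
      simpa using this)

@[simp] lemma adjCLE_apply (e : H0 ≃L[ℂ] K) (x : K) :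
    adjCLE e x = adjoint (e : H0 →L[ℂ] K) x := rfl

lemma fwd_of_pair (a : H0 →L[ℂ] K) (b : H1 →L[ℂ] K)
    (hK : b.comp ((Submodule.orthogonalProjectionOnto H1).comp (adjoint a))
        - (a.comp H1.subtypeL).comp (adjoint b)
        + Complex.I • (a.comp ((qOp H1).comp (adjoint a))) = 0)
    (M : H0 ≃L[ℂ] K) (hM : (M : H0 →L[ℂ] K) = a - Complex.I • (b.comp (Submodule.orthogonalProjectionOnto H1)))
    (N : H1 ≃L[ℂ] K) (hN : (N : H1 →L[ℂ] K) = a.comp H1.subtypeL + Complex.I • b) :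
    Nonempty (H0 ≃ₗᵢ[ℂ] H1) := by
  have h2 : Real.sqrt 2 ^ 2 = 2 := Real.sq_sqrt (by norm_num)
  set c : ℂ := ((Real.sqrt 2 - 1 : ℝ) : ℂ) with hc
  set c' : ℂ := ((Real.sqrt 2 / 2 - 1 : ℝ) : ℂ) with hc'
  have hc1 : c + c + c * c = 1 := by
    have hr : (Real.sqrt 2 - 1) + (Real.sqrt 2 - 1)
        + (Real.sqrt 2 - 1) * (Real.sqrt 2 - 1) = 1 := by linear_combination h2
    have := congrArg (Complex.ofReal) hr
    push_cast at this
    rw [hc]; push_cast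
    linear_combination this
  have hcc' : c + c' + c * c' = 0 := by
    have hr : (Real.sqrt 2 - 1) + (Real.sqrt 2 / 2 - 1)
        + (Real.sqrt 2 - 1) * (Real.sqrt 2 / 2 - 1) = 0 := by linear_combination h2 / 2
    have := congrArg (Complex.ofReal) hr
    push_cast at this
    rw [hc, hc']; push_cast
    linear_combination this
  set E0 : H0 →L[ℂ] H0 := ContinuousLinearMap.id ℂ H0 + c • qOp H1 with hE0
  set E0' : H0 →L[ℂ] H0 := ContinuousLinearMap.id ℂ H0 + c' • qOp H1 with hE0'
  have hcomp : ∀ u v : ℂ, (ContinuousLinearMap.id ℂ H0 + u • qOp H1).comp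
      (ContinuousLinearMap.id ℂ H0 + v • qOp H1)
      = ContinuousLinearMap.id ℂ H0 + (u + v + u * v) • qOp H1 := by
    intro u v
    simp only [ContinuousLinearMap.comp_add, ContinuousLinearMap.add_comp,
      ContinuousLinearMap.comp_smul, ContinuousLinearMap.smul_comp,
      ContinuousLinearMap.comp_id, ContinuousLinearMap.id_comp, hqq, smul_smul]
    module
  have hE2 : E0.comp E0 = ContinuousLinearMap.id ℂ H0 + qOp H1 := by
    rw [hE0, hcomp, hc1, one_smul]
  have hEE'1 : E0.comp E0' = ContinuousLinearMap.id ℂ H0 := by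
    rw [hE0, hE0', hcomp, hcc', zero_smul, add_zero]
  have hEE'2 : E0'.comp E0 = ContinuousLinearMap.id ℂ H0 := by
    rw [hE0, hE0', hcomp]
    have : c' + c + c' * c = 0 := by linear_combination hcc'
    rw [this, zero_smul, add_zero]
  have hadjE : adjoint E0 = E0 := by
    rw [hE0, map_add, adjoint_id, adjoint_smulC, hadj_q, Complex.conj_ofReal]
  set E : H0 ≃L[ℂ] H0 := ContinuousLinearEquiv.equivOfInverse E0 E0'
    (fun x => by have := ContinuousLinearMap.ext_iff.mp hEE'2 x; simpa using this)
    (fun x => by have := ContinuousLinearMap.ext_iff.mp hEE'1 x; simpa using this) with hE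
  set Φp : K ≃L[ℂ] H0 := (adjCLE M).trans E with hΦp
  set Φm : K ≃L[ℂ] H1 := adjCLE N with hΦm
  have hOp : (M : H0 →L[ℂ] K).comp
      ((ContinuousLinearMap.id ℂ H0 + qOp H1).comp (adjoint (M : H0 →L[ℂ] K)))
      = (N : H1 →L[ℂ] K).comp (adjoint (N : H1 →L[ℂ] K)) := by
    rw [hM, hN]; exact hMain H1 a b hK
  have hinner : ∀ x y : K, ⟪(Φp x : H0), (Φp y : H0)⟫_ℂ = ⟪(Φm x : H1), (Φm y : H1)⟫_ℂ := by
    intro x y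
    have hl : (Φp x : H0) = E0 (adjoint (M : H0 →L[ℂ] K) x) := rfl
    have hl' : (Φp y : H0) = E0 (adjoint (M : H0 →L[ℂ] K) y) := rfl
    rw [hl, hl']
    have e1 := adjoint_inner_left E0 (E0 (adjoint (M : H0 →L[ℂ] K) y))
      (adjoint (M : H0 →L[ℂ] K) x)
    rw [hadjE] at e1
    rw [e1]
    have e2 : E0 (E0 (adjoint (M : H0 →L[ℂ] K) y))
        = (ContinuousLinearMap.id ℂ H0 + qOp H1) (adjoint (M : H0 →L[ℂ] K) y) := by
      rw [← ContinuousLinearMap.comp_apply, hE2]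
    rw [e2, adjoint_inner_left]
    have e3 : ⟪(Φm x : H1), (Φm y : H1)⟫_ℂ
        = ⟪x, (N : H1 →L[ℂ] K) (adjoint (N : H1 →L[ℂ] K) y)⟫_ℂ := by
      rw [show (Φm x : H1) = adjoint (N : H1 →L[ℂ] K) x from rfl,
        show (Φm y : H1) = adjoint (N : H1 →L[ℂ] K) y from rfl]
      exact adjoint_inner_left _ _ _
    rw [e3]
    congr 1
    have := ContinuousLinearMap.ext_iff.mp hOp y
    simpa using this
  refine ⟨⟨(Φp.symm.trans Φm).toLinearEquiv, ?_⟩⟩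
  intro x
  have hx : Φp (Φp.symm x) = x := Φp.apply_symm_apply x
  have h2' := hinner (Φp.symm x) (Φp.symm x)
  rw [hx] at h2'
  have hshow : ((Φp.symm.trans Φm).toLinearEquiv x : H1) = Φm (Φp.symm x) := rfl
  rw [hshow]
  rw [← Real.sqrt_sq (norm_nonneg (Φm (Φp.symm x) : H1)), ← Real.sqrt_sq (norm_nonneg x)]
  congr 1
  rw [← inner_self_eq_norm_sq (𝕜 := ℂ), ← inner_self_eq_norm_sq (𝕜 := ℂ), h2']

section Backward
variable (U : H0 ≃ₗᵢ[ℂ] H1)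

/-- `C₀` of the model pair built from a unitary `U : H0 ≃ H1`. -/
def aU : H0 →L[ℂ] H0 :=
  H1.subtypeL.comp (Submodule.orthogonalProjectionOnto H1)
    + ((U.symm.toContinuousLinearEquiv : H1 →L[ℂ] H0)).comp (Submodule.orthogonalProjectionOnto H1)
    + ((Real.sqrt 2 : ℝ) : ℂ) • qOp H1

/-- `C₁` of the model pair built from a unitary `U : H0 ≃ H1`. -/
def bU : H1 →L[ℂ] H0 :=
  Complex.I • (H1.subtypeL - (U.symm.toContinuousLinearEquiv : H1 →L[ℂ] H0))

lemma hUsUc : ((U.symm.toContinuousLinearEquiv : H1 →L[ℂ] H0)).comp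
    ((U.toContinuousLinearEquiv : H0 →L[ℂ] H1)) = ContinuousLinearMap.id ℂ H0 := by
  ext x; simp

lemma hUcUs : ((U.toContinuousLinearEquiv : H0 →L[ℂ] H1)).comp
    ((U.symm.toContinuousLinearEquiv : H1 →L[ℂ] H0)) = ContinuousLinearMap.id ℂ H1 := by
  ext x; simp

lemma hadjUs : adjoint ((U.symm.toContinuousLinearEquiv : H1 →L[ℂ] H0))
    = (U.toContinuousLinearEquiv : H0 →L[ℂ] H1) := by
  rw [eq_comm, eq_adjoint_iff]
  intro x y
  have : (x : H0) = U.symm (U x) := by simp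
  calc ⟪(U.toContinuousLinearEquiv : H0 →L[ℂ] H1) x, y⟫_ℂ
      = ⟪U x, y⟫_ℂ := rfl
    _ = ⟪U.symm (U x), U.symm y⟫_ℂ := (U.symm.inner_map_map (U x) y).symm
    _ = ⟪x, (U.symm.toContinuousLinearEquiv : H1 →L[ℂ] H0) y⟫_ℂ := by
        rw [U.symm_apply_apply]; rfl

lemma hadjUc : adjoint ((U.toContinuousLinearEquiv : H0 →L[ℂ] H1))
    = (U.symm.toContinuousLinearEquiv : H1 →L[ℂ] H0) := by
  rw [← hadjUs, adjoint_adjoint]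

lemma hadj_aU : adjoint (aU H1 U)
    = H1.subtypeL.comp (Submodule.orthogonalProjectionOnto H1)
      + H1.subtypeL.comp ((U.toContinuousLinearEquiv : H0 →L[ℂ] H1))
      + ((Real.sqrt 2 : ℝ) : ℂ) • qOp H1 := by
  rw [aU, map_add, map_add, adjoint_comp, adjoint_comp, adjoint_smulC, hadj_q,
    Submodule.adjoint_subtypeL, Submodule.adjoint_orthogonalProjection, hadjUs,
    Complex.conj_ofReal]

lemma hadj_bU : adjoint (bU H1 U)
    = (-Complex.I) • ((Submodule.orthogonalProjectionOnto H1 : H0 →L[ℂ] H1)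
        - (U.toContinuousLinearEquiv : H0 →L[ℂ] H1)) := by
  rw [bU, adjoint_smulC, map_sub, Submodule.adjoint_subtypeL, hadjUs, Complex.conj_I]

lemma hss : ((Real.sqrt 2 : ℝ) : ℂ) * ((Real.sqrt 2 : ℝ) : ℂ) = 2 := by
  rw [← Complex.ofReal_mul, Real.mul_self_sqrt (by norm_num)]
  norm_num

lemma step1 : (Submodule.orthogonalProjectionOnto H1 : H0 →L[ℂ] H1).comp (adjoint (aU H1 U))
    = (Submodule.orthogonalProjectionOnto H1 : H0 →L[ℂ] H1)
      + (U.toContinuousLinearEquiv : H0 →L[ℂ] H1) := by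
  rw [hadj_aU]
  simp only [ContinuousLinearMap.comp_add, ContinuousLinearMap.comp_smul, hpi', hpq]
  module

lemma step2 : (aU H1 U).comp H1.subtypeL
    = H1.subtypeL + (U.symm.toContinuousLinearEquiv : H1 →L[ℂ] H0) := by
  rw [aU]
  simp only [ContinuousLinearMap.add_comp, ContinuousLinearMap.smul_comp,
    ContinuousLinearMap.comp_assoc, hpi, hqi, ContinuousLinearMap.comp_id, smul_zero, add_zero]

lemma step3 : (qOp H1).comp (adjoint (aU H1 U)) = ((Real.sqrt 2 : ℝ) : ℂ) • qOp H1 := by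
  rw [hadj_aU]
  simp only [ContinuousLinearMap.comp_add, ContinuousLinearMap.comp_smul, hqi', hqq]
  simp

lemma step4 : (aU H1 U).comp ((qOp H1).comp (adjoint (aU H1 U))) = (2:ℂ) • qOp H1 := by
  rw [step3, ContinuousLinearMap.comp_smul, aU]
  simp only [ContinuousLinearMap.add_comp, ContinuousLinearMap.smul_comp,
    ContinuousLinearMap.comp_assoc, hpq, ContinuousLinearMap.comp_zero, zero_add, hqq,
    smul_smul, hss]

lemma hK_U : (bU H1 U).comp ((Submodule.orthogonalProjectionOnto H1).comp (adjoint (aU H1 U)))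
    - ((aU H1 U).comp H1.subtypeL).comp (adjoint (bU H1 U))
    + Complex.I • ((aU H1 U).comp ((qOp H1).comp (adjoint (aU H1 U)))) = 0 := by
  rw [step1, step2, step4, hadj_bU, bU]
  simp only [ContinuousLinearMap.smul_comp, ContinuousLinearMap.comp_smul,
    ContinuousLinearMap.comp_add, ContinuousLinearMap.add_comp,
    ContinuousLinearMap.comp_sub, ContinuousLinearMap.sub_comp, hUsUc, smul_smul]
  rw [qOp]
  module

lemma hMU_eq : aU H1 U - Complex.I • ((bU H1 U).comp (Submodule.orthogonalProjectionOnto H1))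
    = (2:ℂ) • (H1.subtypeL.comp (Submodule.orthogonalProjectionOnto H1)) + ((Real.sqrt 2 : ℝ) : ℂ) • qOp H1 := by
  rw [aU, bU]
  simp only [ContinuousLinearMap.smul_comp, ContinuousLinearMap.sub_comp, smul_smul,
    Complex.I_mul_I]
  module

lemma hNU_eq : (aU H1 U).comp H1.subtypeL + Complex.I • bU H1 U
    = (2:ℂ) • (U.symm.toContinuousLinearEquiv : H1 →L[ℂ] H0) := by
  rw [step2, bU, smul_smul, Complex.I_mul_I]
  module

lemma MU : ∃ e : H0 ≃L[ℂ] H0,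
    (e : H0 →L[ℂ] H0) = aU H1 U - Complex.I • ((bU H1 U).comp (Submodule.orthogonalProjectionOnto H1)) := by
  set f : H0 →L[ℂ] H0 :=
    (2:ℂ) • (H1.subtypeL.comp (Submodule.orthogonalProjectionOnto H1)) + ((Real.sqrt 2 : ℝ) : ℂ) • qOp H1 with hf
  set g : H0 →L[ℂ] H0 :=
    (2⁻¹:ℂ) • (H1.subtypeL.comp (Submodule.orthogonalProjectionOnto H1))
      + (((Real.sqrt 2 : ℝ) : ℂ)/2) • qOp H1 with hg
  have hq0 : (H1.subtypeL.comp (Submodule.orthogonalProjectionOnto H1)).comp (qOp H1) = 0 := by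
    rw [ContinuousLinearMap.comp_assoc, hpq, ContinuousLinearMap.comp_zero]
  have hq0' : (qOp H1).comp (H1.subtypeL.comp (Submodule.orthogonalProjectionOnto H1)) = 0 := by
    rw [hqi']
  have hii : (H1.subtypeL.comp (Submodule.orthogonalProjectionOnto H1)).comp
      (H1.subtypeL.comp (Submodule.orthogonalProjectionOnto H1)) = H1.subtypeL.comp (Submodule.orthogonalProjectionOnto H1) := by
    rw [ContinuousLinearMap.comp_assoc, hpi']
  have hsum : H1.subtypeL.comp (Submodule.orthogonalProjectionOnto H1) + qOp H1
      = ContinuousLinearMap.id ℂ H0 := by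
    rw [qOp]; abel
  have key : ∀ u v : ℂ, u * v = 1 →
      ∀ w t : ℂ, w * t = 1 →
      (u • (H1.subtypeL.comp (Submodule.orthogonalProjectionOnto H1)) + w • qOp H1).comp
        (v • (H1.subtypeL.comp (Submodule.orthogonalProjectionOnto H1)) + t • qOp H1)
        = ContinuousLinearMap.id ℂ H0 := by
    intro u v huv w t hwt
    simp only [ContinuousLinearMap.comp_add, ContinuousLinearMap.add_comp,
      ContinuousLinearMap.comp_smul, ContinuousLinearMap.smul_comp, hq0, hq0', hii, hqq,
      smul_smul, smul_zero, add_zero, zero_add]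
    rw [mul_comm v u, mul_comm t w, huv, hwt, one_smul, one_smul, hsum]
  have h1 : f.comp g = ContinuousLinearMap.id ℂ H0 := by
    rw [hf, hg]
    exact key _ _ (by norm_num) _ _ (by rw [mul_div_assoc']; rw [hss]; norm_num)
  have h2 : g.comp f = ContinuousLinearMap.id ℂ H0 := by
    rw [hf, hg]
    exact key _ _ (by norm_num) _ _ (by rw [div_mul_eq_mul_div, hss]; norm_num)
  refine ⟨ContinuousLinearEquiv.equivOfInverse f g
    (fun x => by have := ContinuousLinearMap.ext_iff.mp h2 x; simpa using this)
    (fun x => by have := ContinuousLinearMap.ext_iff.mp h1 x; simpa using this), ?_⟩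
  rw [hMU_eq]; rfl

lemma NU : ∃ e : H1 ≃L[ℂ] H0,
    (e : H1 →L[ℂ] H0) = (aU H1 U).comp H1.subtypeL + Complex.I • bU H1 U := by
  set f : H1 →L[ℂ] H0 := (2:ℂ) • (U.symm.toContinuousLinearEquiv : H1 →L[ℂ] H0) with hf
  set g : H0 →L[ℂ] H1 := (2⁻¹:ℂ) • (U.toContinuousLinearEquiv : H0 →L[ℂ] H1) with hg
  have h1 : f.comp g = ContinuousLinearMap.id ℂ H0 := by
    rw [hf, hg]
    simp only [ContinuousLinearMap.comp_smul, ContinuousLinearMap.smul_comp, smul_smul, hUsUc]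
    norm_num
  have h2 : g.comp f = ContinuousLinearMap.id ℂ H1 := by
    rw [hf, hg]
    simp only [ContinuousLinearMap.comp_smul, ContinuousLinearMap.smul_comp, smul_smul, hUcUs]
    norm_num
  refine ⟨ContinuousLinearEquiv.equivOfInverse f g
    (fun x => by have := ContinuousLinearMap.ext_iff.mp h2 x; simpa using this)
    (fun x => by have := ContinuousLinearMap.ext_iff.mp h1 x; simpa using this), ?_⟩
  rw [hNU_eq]; rfl

end Backward

lemma ImOp_combo (T S : K →L[ℂ] K) (c : ℂ) :
    (2:ℂ) • ImOp T + c • S = 0 ↔ T - adjoint T + (c * Complex.I) • S = 0 := by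
  rw [ImOp, smul_smul, show (2:ℂ) * (2*Complex.I)⁻¹ = -Complex.I by
    rw [mul_inv, Complex.inv_I]; ring]
  constructor
  · intro h
    have h' := congrArg (fun Y => Complex.I • Y) h
    simp only [smul_add, smul_smul, smul_zero] at h'
    rw [show Complex.I * -Complex.I = 1 by rw [mul_neg, Complex.I_mul_I, neg_neg],
      one_smul, mul_comm Complex.I c] at h'
    exact h'
  · intro h
    have h' := congrArg (fun Y => (-Complex.I) • Y) h
    simp only [smul_add, smul_smul, smul_zero] at h'
    rw [show -Complex.I * (c * Complex.I) = c by linear_combination (-c) * Complex.I_sq,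
      show ((-Complex.I) • (T - adjoint T) : K →L[ℂ] K) = -Complex.I • (T - adjoint T) from rfl]
      at h'
    exact h'

end AuxNS

set_option maxHeartbeats 1600000 in
set_option synthInstance.maxHeartbeats 1000000 in


theorem statement2 {H0 : Type u}
    [NormedAddCommGroup H0] [InnerProductSpace ℂ H0] [CompleteSpace H0]
    (H1 : Submodule ℂ H0) (hH1 : CompleteSpace ↥H1) (α : ℝ) (hα : α = 1 ∨ α = -1) :
    ((∃ (Kp Km : HilbertC.{u}) (C0 : ℂ → H0 →L[ℂ] Kp.carrier)
        (C1 : ℂ → ↥H1 →L[ℂ] Kp.carrier) (D0 : ℂ → H0 →L[ℂ] Km.carrier)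
        (D1 : ℂ → ↥H1 →L[ℂ] Km.carrier), IsRZeroPair H1 hH1 α C0 C1 D0 D1)
      ↔ Nonempty (H0 ≃ₗᵢ[ℂ] ↥H1)) ∧
    (FiniteDimensional ℂ H0 →
      ((∃ (Kp Km : HilbertC.{u}) (C0 : ℂ → H0 →L[ℂ] Kp.carrier)
          (C1 : ℂ → ↥H1 →L[ℂ] Kp.carrier) (D0 : ℂ → H0 →L[ℂ] Km.carrier)
          (D1 : ℂ → ↥H1 →L[ℂ] Km.carrier), IsRZeroPair H1 hH1 α C0 C1 D0 D1)
        ↔ H1 = ⊤)) := by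
  letI := hH1
  have hP2 : P2full H1 hH1 = qOp H1 := rfl
  have hUHP : Complex.I ∈ UHP := by simp [UHP]
  have main : (∃ (Kp Km : HilbertC.{u}) (C0 : ℂ → H0 →L[ℂ] Kp.carrier)
      (C1 : ℂ → ↥H1 →L[ℂ] Kp.carrier) (D0 : ℂ → H0 →L[ℂ] Km.carrier)
      (D1 : ℂ → ↥H1 →L[ℂ] Km.carrier), IsRZeroPair H1 hH1 α C0 C1 D0 D1)
      ↔ Nonempty (H0 ≃ₗᵢ[ℂ] ↥H1) := by
    constructor
    · rintro ⟨Kp, Km, C0, C1, D0, D1, hpair⟩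
      obtain ⟨hclass, heq, hex1, hexm1⟩ := hpair
      obtain ⟨hα', _, _, _, _, _, _, _, hiv1, hiv2⟩ := hclass
      rcases hα with h1 | hm1
      · subst h1
        obtain ⟨M, hM⟩ := (hiv1 rfl).1 Complex.I hUHP
        obtain ⟨N, hN⟩ := hex1 rfl Complex.I hUHP
        have he := heq Complex.I hUHP
        rw [hP2, show ((1:ℝ):ℂ) = 1 from by norm_num] at he
        have hKc := (ImOp_combo _ _ _).mp he
        rw [one_mul, hTadj] at hKc
        exact fwd_of_pair H1 (C0 Complex.I) (C1 Complex.I) hKc M hM N hN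
      · subst hm1
        obtain ⟨N', hN'⟩ := (hiv2 rfl).1 Complex.I hUHP
        obtain ⟨M', hM'⟩ := hexm1 rfl Complex.I hUHP
        have he := heq Complex.I hUHP
        rw [hP2, show ((-1:ℝ):ℂ) = -1 from by norm_num] at he
        have hKc := (ImOp_combo _ _ _).mp he
        rw [hTadj] at hKc
        have hKc2 : (-(C1 Complex.I)).comp
              ((Submodule.orthogonalProjectionOnto H1).comp (adjoint (C0 Complex.I)))
            - ((C0 Complex.I).comp H1.subtypeL).comp (adjoint (-(C1 Complex.I)))
            + Complex.I • ((C0 Complex.I).comp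
                ((qOp H1).comp (adjoint (C0 Complex.I)))) = 0 := by
          simp only [ContinuousLinearMap.neg_comp, ContinuousLinearMap.comp_neg, map_neg]
          linear_combination (norm := module) -hKc
        refine fwd_of_pair H1 (C0 Complex.I) (-(C1 Complex.I)) hKc2 M' ?_ N' ?_
        · rw [hM']
          simp only [ContinuousLinearMap.neg_comp, smul_neg, sub_neg_eq_add]
        · rw [hN']
          simp only [smul_neg]
          module
    · rintro ⟨U⟩
      rcases hα with h1 | hm1
      · subst h1
        refine ⟨⟨H0⟩, ⟨H0⟩, fun _ => aU H1 U, fun _ => bU H1 U,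
          fun _ => aU H1 U, fun _ => bU H1 U, ?_⟩
        have hieq : ∀ z ∈ UHP,
            (2:ℂ) • ImOp ((bU H1 U).comp
              ((Submodule.orthogonalProjectionOnto H1).comp (adjoint (aU H1 U))))
            + (((1:ℝ)):ℂ) • ((aU H1 U).comp
              ((P2full H1 hH1).comp (adjoint (aU H1 U)))) = 0 := by
          intro z hz
          rw [hP2, show ((1:ℝ):ℂ) = 1 from by norm_num]
          refine (ImOp_combo _ _ _).mpr ?_
          rw [one_mul, hTadj]
          exact hK_U H1 U
        refine ⟨⟨Or.inl rfl, differentiableOn_const _, differentiableOn_const _,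
          differentiableOn_const _, differentiableOn_const _, ?_, ?_, ?_, ?_, ?_⟩, ?_, ?_, ?_⟩
        · intro z hz
          rw [hieq z hz]
          exact ContinuousLinearMap.isPositive_zero
        · intro z hz
          have := hieq Complex.I hUHP
          rw [this, neg_zero]
          exact ContinuousLinearMap.isPositive_zero
        · intro z hz
          rw [hP2]
          simp only [Complex.ofReal_one, mul_one]
          exact hK_U H1 U
        · intro _
          exact ⟨fun z hz => MU H1 U, fun z hz => NU H1 U⟩
        · intro h; exact absurd h (by norm_num)
        · exact hieq
        · intro _
          exact fun z hz => NU H1 U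
        · intro h; exact absurd h (by norm_num)
      · subst hm1
        refine ⟨⟨H0⟩, ⟨H0⟩, fun _ => aU H1 U, fun _ => -(bU H1 U),
          fun _ => aU H1 U, fun _ => -(bU H1 U), ?_⟩
        have hieq : ∀ z ∈ UHP,
            (2:ℂ) • ImOp ((-(bU H1 U)).comp
              ((Submodule.orthogonalProjectionOnto H1).comp (adjoint (aU H1 U))))
            + (((-1:ℝ)):ℂ) • ((aU H1 U).comp
              ((P2full H1 hH1).comp (adjoint (aU H1 U)))) = 0 := by
          intro z hz
          rw [hP2, show ((-1:ℝ):ℂ) = -1 from by norm_num]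
          refine (ImOp_combo _ _ _).mpr ?_
          have hb := hK_U H1 U
          simp only [ContinuousLinearMap.neg_comp, map_neg, ContinuousLinearMap.comp_neg]
          rw [hTadj]
          linear_combination (norm := module) -hb
        refine ⟨⟨Or.inr rfl, differentiableOn_const _, differentiableOn_const _,
          differentiableOn_const _, differentiableOn_const _, ?_, ?_, ?_, ?_, ?_⟩, ?_, ?_, ?_⟩
        · intro z hz
          rw [hieq z hz]
          exact ContinuousLinearMap.isPositive_zero
        · intro z hz
          have := hieq Complex.I hUHP
          rw [this, neg_zero]
          exact ContinuousLinearMap.isPositive_zero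
        · intro z hz
          rw [hP2]
          have hb := hK_U H1 U
          simp only [ContinuousLinearMap.neg_comp, map_neg, ContinuousLinearMap.comp_neg,
            Complex.ofReal_neg, Complex.ofReal_one, mul_neg, mul_one, neg_smul]
          linear_combination (norm := module) -hb
        · intro h; exact absurd h (by norm_num)
        · intro _
          constructor
          · intro z hz
            obtain ⟨e, he⟩ := NU H1 U
            refine ⟨e, ?_⟩
            rw [he]
            simp only [smul_neg, sub_neg_eq_add]
          · intro z hz
            obtain ⟨e, he⟩ := MU H1 U
            refine ⟨e, ?_⟩
            rw [he]
            simp only [ContinuousLinearMap.neg_comp, smul_neg, ← sub_eq_add_neg]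
        · exact hieq
        · intro h; exact absurd h (by norm_num)
        · intro _
          intro z hz
          obtain ⟨e, he⟩ := MU H1 U
          refine ⟨e, ?_⟩
          rw [he]
          simp only [ContinuousLinearMap.neg_comp, smul_neg, ← sub_eq_add_neg]
  refine ⟨main, fun hfd => main.trans ?_⟩
  constructor
  · rintro ⟨f⟩
    haveI := hfd
    exact Submodule.eq_top_of_finrank_eq (f.toLinearEquiv.finrank_eq).symm
  · rintro rfl
    exact ⟨⟨Submodule.topEquiv.symm, fun x => rfl⟩⟩
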